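/- For all integers r ≥ 0 and 0 ≤ k < N, one has |δ_{r,k}| ≤ 2^{−rb} and |γ_{r,k}| ≤ 2^{−r(b−2)}. -/
import Mathlib

/-- Generalized binomial coefficient `C(x, r) = x (x-1) ⋯ (x-r+1) / r!`. -/
noncomputable def gbc (x : ℝ) (r : ℕ) : ℝ :=
  (∏ j ∈ Finset.range r, (x - j)) / (r.factorial : ℝ)

/-- `δ_{r,k} = C(k/N, r) (-2^(-b))^r`. -/
noncomputable def deltaC (b N r k : ℕ) : ℝ :=
  gbc ((k : ℝ) / N) r * (-(2:ℝ) ^ (-(b:ℤ))) ^ r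

/-- `γ_{0,k} = 1` and `γ_{r,k} = (-k/(rN)) C(-(k+r)/N - 1, r-1) (-2^(-b))^r` for `r ≥ 1`. -/
noncomputable def gammaC (b N r k : ℕ) : ℝ :=
  if r = 0 then 1
  else (-(k : ℝ) / (r * N)) * gbc (-((k : ℝ) + r) / N - 1) (r - 1) * (-(2:ℝ) ^ (-(b:ℤ))) ^ r

lemma aux_choose_le_two_pow (n k : ℕ) : n.choose k ≤ 2 ^ n := by
  rcases le_or_gt k n with h | h
  · calc n.choose k ≤ ∑ i ∈ Finset.range (n + 1), n.choose i :=
        Finset.single_le_sum (fun i _ => Nat.zero_le _)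
          (Finset.mem_range.mpr (Nat.lt_succ_of_le h))
    _ = 2 ^ n := Nat.sum_range_choose n
  · rw [Nat.choose_eq_zero_of_lt h]; exact Nat.zero_le _

lemma aux_prod_asc (m : ℕ) : ∀ n : ℕ, (∏ j ∈ Finset.range n, (m + j)) = m.ascFactorial n
  | 0 => by simp
  | n + 1 => by
    rw [Finset.prod_range_succ, aux_prod_asc m n, Nat.ascFactorial_succ, Nat.mul_comm]

lemma aux_key (n : ℕ) :
    (∏ j ∈ Finset.range n, (j + n + 3)) ≤ 4 ^ (n + 1) * (n + 1).factorial := by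
  have h1 : (∏ j ∈ Finset.range n, (j + n + 3)) = (n + 3).ascFactorial n := by
    rw [← aux_prod_asc]
    exact Finset.prod_congr rfl fun j _ => by ring
  have h2 : (n + 2).factorial * (n + 3).ascFactorial n = (2 * n + 2).factorial := by
    have := Nat.factorial_mul_ascFactorial (n + 2) n
    rw [show n + 2 + 1 = n + 3 from rfl, show n + 2 + n = 2 * n + 2 by ring] at this
    exact this
  have h3 : (2 * n + 2).choose (n + 1) * ((n + 1).factorial * (n + 1).factorial)
      = (2 * n + 2).factorial := by
    have := Nat.choose_mul_factorial_mul_factorial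
      (show n + 1 ≤ 2 * n + 2 by omega)
    rw [show 2 * n + 2 - (n + 1) = n + 1 by omega] at this
    rw [← this]; ring
  have hc : (2 * n + 2).choose (n + 1) ≤ 4 ^ (n + 1) := by
    calc (2 * n + 2).choose (n + 1) ≤ 2 ^ (2 * n + 2) := aux_choose_le_two_pow _ _
    _ = 4 ^ (n + 1) := by rw [show 2 * n + 2 = 2 * (n + 1) by ring, pow_mul]; norm_num
  have h4 : (2 * n + 2).factorial ≤ 4 ^ (n + 1) * ((n + 1).factorial * (n + 1).factorial) := by
    rw [← h3]; exact Nat.mul_le_mul_right _ hc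
  have h5 : (n + 2).factorial * (∏ j ∈ Finset.range n, (j + n + 3))
      ≤ (n + 2).factorial * (4 ^ (n + 1) * (n + 1).factorial) := by
    rw [h1, h2]
    calc (2 * n + 2).factorial
        ≤ 4 ^ (n + 1) * ((n + 1).factorial * (n + 1).factorial) := h4
      _ ≤ 4 ^ (n + 1) * ((n + 2).factorial * (n + 1).factorial) :=
          Nat.mul_le_mul_left _ (Nat.mul_le_mul_right _ (Nat.factorial_le (by omega)))
      _ = (n + 2).factorial * (4 ^ (n + 1) * (n + 1).factorial) := by ring
  exact Nat.le_of_mul_le_mul_left h5 (n + 2).factorial_pos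

/-- for `r ≥ 0` and `0 ≤ k < N`, `|δ_{r,k}| ≤ 2^(-rb)` and
`|γ_{r,k}| ≤ 2^(-r(b-2))`. -/
theorem gamma_delta_coeff_bounds (b N : ℕ) (hb : 4 ≤ b) (hN : 3 ≤ N)
    (r k : ℕ) (hk : k < N) :
    |deltaC b N r k| ≤ (2:ℝ) ^ (-((r : ℤ) * b)) ∧
    |gammaC b N r k| ≤ (2:ℝ) ^ (-((r : ℤ) * ((b : ℤ) - 2))) := by
  have hN0 : (0:ℝ) < N := by positivity
  have hkN0 : (0:ℝ) ≤ (k:ℝ) / N := by positivity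
  have hkN1 : (k:ℝ) / N < 1 := by
    rw [div_lt_one hN0]; exact_mod_cast hk
  have habs_pow : |(-(2:ℝ) ^ (-(b:ℤ))) ^ r| = (2:ℝ) ^ (-((r:ℤ) * b)) := by
    rw [abs_pow, abs_neg, abs_of_pos (by positivity : (0:ℝ) < (2:ℝ) ^ (-(b:ℤ))),
      ← zpow_natCast ((2:ℝ) ^ (-(b:ℤ))) r, ← zpow_mul]
    ring_nf
  constructor
  · -- delta bound
    have hgbc : |gbc ((k:ℝ) / N) r| ≤ 1 := by
      unfold gbc
      rw [abs_div, abs_of_pos (by exact_mod_cast r.factorial_pos : (0:ℝ) < r.factorial),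
        div_le_one (by exact_mod_cast r.factorial_pos)]
      calc |∏ j ∈ Finset.range r, ((k:ℝ)/N - j)| = ∏ j ∈ Finset.range r, |(k:ℝ)/N - j| :=
            Finset.abs_prod _ _
        _ ≤ ∏ j ∈ Finset.range r, ((j:ℝ) + 1) := by
            refine Finset.prod_le_prod (fun j _ => abs_nonneg _) (fun j _ => ?_)
            rw [abs_le]
            constructor <;> nlinarith [Nat.cast_nonneg (α := ℝ) j]
        _ = (r.factorial : ℝ) := by
            rw [← Finset.prod_range_add_one_eq_factorial]; push_cast; rfl
    calc |deltaC b N r k| = |gbc ((k:ℝ)/N) r| * |(-(2:ℝ) ^ (-(b:ℤ))) ^ r| := abs_mul _ _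
      _ ≤ 1 * ((2:ℝ) ^ (-((r:ℤ) * b))) := by
          rw [habs_pow]; exact mul_le_mul_of_nonneg_right hgbc (by positivity)
      _ = (2:ℝ) ^ (-((r:ℤ) * b)) := one_mul _
  · -- gamma bound
    rcases Nat.eq_zero_or_pos r with hr | hr
    · simp [gammaC, hr]
    · obtain ⟨n, rfl⟩ : ∃ n, r = n + 1 := ⟨r - 1, by omega⟩
      unfold gammaC
      rw [if_neg (Nat.succ_ne_zero n)]
      set r := n + 1 with hrdef
      have hr1 : r - 1 = n := rfl
      have hrpos : (0:ℝ) < r := by positivity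
      have hfac1 : |(-(k:ℝ)) / (r * N)| ≤ (k:ℝ) / (r * N) := by
        rw [abs_div, abs_neg, abs_of_nonneg (Nat.cast_nonneg k),
          abs_of_pos (by positivity : (0:ℝ) < (r:ℝ) * N)]
      have hgbc2 : |gbc (-((k:ℝ) + r) / N - 1) n| ≤
          (∏ j ∈ Finset.range n, ((j:ℝ) + r + 2)) / (n.factorial : ℝ) := by
        unfold gbc
        rw [abs_div, abs_of_pos (by exact_mod_cast n.factorial_pos : (0:ℝ) < n.factorial)]
        gcongr
        calc |∏ j ∈ Finset.range n, (-((k:ℝ) + r) / N - 1 - j)|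
            = ∏ j ∈ Finset.range n, |(-((k:ℝ) + r) / N - 1 - j)| := Finset.abs_prod _ _
          _ ≤ ∏ j ∈ Finset.range n, ((j:ℝ) + r + 2) := by
              refine Finset.prod_le_prod (fun j _ => abs_nonneg _) (fun j _ => ?_)
              rw [neg_div]
              set c : ℝ := ((k:ℝ) + r) / N with hcdef
              have h1 : c ≤ 1 + r := by
                rw [hcdef, div_le_iff₀ hN0]
                have hkr : (k:ℝ) ≤ (N:ℝ) - 1 := by
                  have : (k:ℝ) + 1 ≤ N := by exact_mod_cast hk
                  linarith
                have hN1 : (1:ℝ) ≤ N := by exact_mod_cast hN.trans' (by norm_num)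
                nlinarith [Nat.cast_nonneg (α := ℝ) r]
              have h2 : (0:ℝ) ≤ c := by rw [hcdef]; positivity
              rw [abs_le]
              constructor <;> nlinarith [Nat.cast_nonneg (α := ℝ) j]
      have hkey : (∏ j ∈ Finset.range n, ((j:ℝ) + r + 2)) ≤ 4 ^ r * (r.factorial : ℝ) := by
        have h := aux_key n
        have hcast : (∏ j ∈ Finset.range n, ((j:ℝ) + r + 2))
            = ((∏ j ∈ Finset.range n, (j + n + 3) : ℕ) : ℝ) := by
          push_cast [hrdef]
          exact Finset.prod_congr rfl fun j _ => by ring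
        rw [hcast, hrdef]
        exact_mod_cast h
      have hfac1' : (k:ℝ) / (r * N) ≤ 1 / r := by
        rw [div_le_div_iff₀ (by positivity) hrpos]
        have hkr : (k:ℝ) ≤ N := by exact_mod_cast hk.le
        nlinarith
      have hmain : |(-(k:ℝ) / (r * N)) * gbc (-((k:ℝ) + r) / N - 1) n| ≤ 4 ^ r := by
        rw [abs_mul]
        have hb1 : |(-(k:ℝ)) / (r * N)| ≤ 1 / r := le_trans hfac1 hfac1'
        calc |(-(k:ℝ)) / (r * N)| * |gbc (-((k:ℝ) + r) / N - 1) n|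
            ≤ (1 / r) * ((∏ j ∈ Finset.range n, ((j:ℝ) + r + 2)) / (n.factorial : ℝ)) :=
              mul_le_mul hb1 hgbc2 (abs_nonneg _) (by positivity)
          _ ≤ (1 / r) * ((4 ^ r * (r.factorial : ℝ)) / (n.factorial : ℝ)) := by
              gcongr
          _ = 4 ^ r * ((r.factorial : ℝ) / ((r:ℝ) * n.factorial)) := by
              field_simp
          _ = 4 ^ r := by
              rw [show (r.factorial : ℝ) = (r:ℝ) * n.factorial by
                rw [hrdef]; push_cast [Nat.factorial_succ]; ring]
              rw [div_self (by positivity), mul_one]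
      calc |(-(k:ℝ) / (↑r * ↑N)) * gbc (-((k:ℝ) + ↑r) / ↑N - 1) (r - 1) *
            (-(2:ℝ) ^ (-(b:ℤ))) ^ r|
          = |(-(k:ℝ) / (↑r * ↑N)) * gbc (-((k:ℝ) + ↑r) / ↑N - 1) n| *
            |(-(2:ℝ) ^ (-(b:ℤ))) ^ r| := by rw [hr1, abs_mul]
        _ ≤ 4 ^ r * (2:ℝ) ^ (-((r:ℤ) * b)) := by
            rw [habs_pow]
            exact mul_le_mul_of_nonneg_right hmain (by positivity)
        _ ≤ (2:ℝ) ^ (-((r:ℤ) * ((b:ℤ) - 2))) := by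
            have h4 : (4:ℝ) ^ r = (2:ℝ) ^ ((2 * r : ℤ)) := by
              rw [show (4:ℝ) = (2:ℝ)^(2:ℤ) by norm_num, ← zpow_natCast ((2:ℝ)^(2:ℤ)) r,
                ← zpow_mul]
            rw [h4, ← zpow_add₀ (by norm_num : (2:ℝ) ≠ 0)]
            exact zpow_le_zpow_right₀ (by norm_num : (1:ℝ) ≤ 2) (by push_cast; ring_nf; omega)
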